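/- arXiv:2202.09329 — 3 statements merged into one kernel-verified Lean document; each statement's English description precedes it below -/
import Mathlib

section
/- Let K be a field and let P ∈ K[x]^{m×n} have no zero row, let s ∈ ℤ^n, and let t = rdeg_s(P). Then P is s-reduced if and only if for every k ≥ 1 and every matrix Q ∈ K[x]^{k×m} one has rdeg_s(Q·P) = rdeg_t(Q). -/
open Polynomial Matrix

noncomputable section

variable {K : Type*} [Field K]

/-- Degree of a univariate polynomial, viewed in `ℤ ∪ {⊥}`. -/
def pdegZ (p : K[X]) : WithBot ℤ := p.degree.map (Nat.cast : ℕ → ℤ)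

/-- Shifted degree (`s`-degree) of a row vector. -/
def sdeg {n : ℕ} (s : Fin n → ℤ) (p : Fin n → K[X]) : WithBot ℤ :=
  Finset.univ.sup fun j => pdegZ (p j) + (s j : WithBot ℤ)

/-- `s`-leading matrix of `P`. -/
def leadMat {m n : ℕ} (s : Fin n → ℤ) (P : Matrix (Fin m) (Fin n) K[X]) :
    Matrix (Fin m) (Fin n) K :=
  Matrix.of fun i j =>
    if pdegZ (P i j) + (s j : WithBot ℤ) = sdeg s (P i) then (P i j).leadingCoeff else 0

/-- `P` is `s`-reduced: its `s`-leading matrix has full row rank. -/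
def IsShiftReduced {m n : ℕ} (s : Fin n → ℤ) (P : Matrix (Fin m) (Fin n) K[X]) : Prop :=
  (leadMat s P).rank = m

/-- `j` is the `s`-pivot index of the row `p`: the largest index where the `s`-degree is attained. -/
def IsPivotIndex {n : ℕ} (s : Fin n → ℤ) (p : Fin n → K[X]) (j : Fin n) : Prop :=
  pdegZ (p j) + (s j : WithBot ℤ) = sdeg s p ∧
  ∀ j', j < j' → pdegZ (p j') + (s j' : WithBot ℤ) ≠ sdeg s p

/-- `P` is in `s`-weak Popov form: no zero row and strictly increasing `s`-pivot indices. -/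
def IsWeakPopov {m n : ℕ} (s : Fin n → ℤ) (P : Matrix (Fin m) (Fin n) K[X]) : Prop :=
  (∀ i, P i ≠ 0) ∧ ∃ piv : Fin m → Fin n, StrictMono piv ∧ ∀ i, IsPivotIndex s (P i) (piv i)

/-- The rows of `Kb` form a basis of the left kernel of `F`. -/
def IsKernelBasis {ℓ m : ℕ} {β : Type*} [Fintype β]
    (Kb : Matrix (Fin ℓ) (Fin m) K[X]) (F : Matrix (Fin m) β K[X]) : Prop :=
  (∀ i, Kb i ᵥ* F = 0) ∧
  LinearIndependent K[X] (fun i : Fin ℓ => Kb i) ∧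
  ∀ p : Fin m → K[X], p ᵥ* F = 0 → ∃ u : Fin ℓ → K[X], p = u ᵥ* Kb

/-- Membership in the relation module `Rel_M(F)`. -/
def InRelModule {m n : ℕ} (M : Matrix (Fin n) (Fin n) K[X])
    (F : Matrix (Fin m) (Fin n) K[X]) (p : Fin m → K[X]) : Prop :=
  ∃ q : Fin n → K[X], p ᵥ* F = q ᵥ* M

/-- The rows of `A` form a basis of the relation module `Rel_M(F)`. -/
def IsRelationBasis {ℓ m n : ℕ} (M : Matrix (Fin n) (Fin n) K[X])
    (A : Matrix (Fin ℓ) (Fin m) K[X]) (F : Matrix (Fin m) (Fin n) K[X]) : Prop :=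
  (∀ i, InRelModule M F (A i)) ∧
  LinearIndependent K[X] (fun i : Fin ℓ => A i) ∧
  ∀ p : Fin m → K[X], InRelModule M F p → ∃ u : Fin ℓ → K[X], p = u ᵥ* A

/-- Rank of a polynomial matrix: its rank over the fraction field `K(x)`. -/
def polyRank {α β : Type*} [Fintype β] (F : Matrix α β K[X]) : ℕ :=
  (F.map (algebraMap K[X] (RatFunc K))).rank

/-- Lexicographic comparison of tuples. -/
def lexLE {r n : ℕ} (a b : Fin r → Fin n) : Prop :=
  ∀ i, (∀ k, k < i → a k = b k) → a i ≤ b i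

/-- `j` lists the column rank profile of `F`: the lexicographically smallest strictly
increasing tuple of `rank F` column indices selecting columns of full rank. -/
def IsColRankProfile {α : Type*} {n r : ℕ} (F : Matrix α (Fin n) K[X])
    (j : Fin r → Fin n) : Prop :=
  StrictMono j ∧ polyRank F = r ∧ polyRank (F.submatrix id j) = r ∧
  ∀ j' : Fin r → Fin n, StrictMono j' → polyRank (F.submatrix id j') = r → lexLE j j'


section PDPaux

variable {K : Type*} [Field K]

/-- Coefficient of a polynomial at an integer index (zero for negative indices). -/
def coeffZ (q : K[X]) (e : ℤ) : K := if 0 ≤ e then q.coeff e.toNat else 0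

lemma pdegZ_zero : pdegZ (0 : K[X]) = ⊥ := by simp [pdegZ]

lemma pdegZ_eq_coe {q : K[X]} (h : q ≠ 0) :
    pdegZ q = ((q.natDegree : ℤ) : WithBot ℤ) := by
  rw [pdegZ, Polynomial.degree_eq_natDegree h]
  rfl

lemma wb_add_le {x : WithBot ℤ} {a b : ℤ} :
    x + (a : WithBot ℤ) ≤ (b : WithBot ℤ) ↔ x ≤ ((b - a : ℤ) : WithBot ℤ) := by
  cases x with
  | bot => simp
  | coe x =>
    rw [← WithBot.coe_add, WithBot.coe_le_coe, WithBot.coe_le_coe]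
    omega

lemma wb_add_lt {x : WithBot ℤ} {a b : ℤ} :
    x + (a : WithBot ℤ) < (b : WithBot ℤ) ↔ x < ((b - a : ℤ) : WithBot ℤ) := by
  cases x with
  | bot => simpa using WithBot.bot_lt_coe _
  | coe x =>
    rw [← WithBot.coe_add, WithBot.coe_lt_coe, WithBot.coe_lt_coe]
    omega

lemma wb_add_eq {x : WithBot ℤ} {a b : ℤ} :
    x + (a : WithBot ℤ) = (b : WithBot ℤ) ↔ x = ((b - a : ℤ) : WithBot ℤ) := by
  cases x with
  | bot => simp
  | coe x =>
    rw [← WithBot.coe_add, WithBot.coe_inj, WithBot.coe_inj]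
    omega

lemma le_pdegZ_of_coeffZ_ne_zero {q : K[X]} {e : ℤ} (h : coeffZ q e ≠ 0) :
    (e : WithBot ℤ) ≤ pdegZ q := by
  rw [coeffZ] at h
  split_ifs at h with he
  · have hq : q ≠ 0 := fun h0 => h (by simp [h0])
    rw [pdegZ_eq_coe hq, WithBot.coe_le_coe]
    have := Polynomial.le_natDegree_of_ne_zero h
    omega
  · exact absurd rfl h

lemma coeffZ_eq_zero_of_lt {q : K[X]} {e : ℤ} (h : pdegZ q < (e : WithBot ℤ)) :
    coeffZ q e = 0 := by
  by_contra hc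
  exact absurd (le_pdegZ_of_coeffZ_ne_zero hc) (not_le.mpr h)

lemma coeffZ_of_pdegZ_eq {q : K[X]} {e : ℤ} (h : pdegZ q = (e : WithBot ℤ)) :
    coeffZ q e = q.leadingCoeff := by
  have hq : q ≠ 0 := by rintro rfl; rw [pdegZ_zero] at h; exact absurd h (by simp)
  rw [pdegZ_eq_coe hq, WithBot.coe_inj] at h
  rw [coeffZ, if_pos (by omega)]
  have h2 : e.toNat = q.natDegree := by omega
  rw [h2, Polynomial.coeff_natDegree]

lemma natDegree_le_of_pdegZ_le {q : K[X]} {a : ℤ} (ha : 0 ≤ a)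
    (h : pdegZ q ≤ (a : WithBot ℤ)) : q.natDegree ≤ a.toNat := by
  by_cases hq : q = 0
  · simp [hq]
  · rw [pdegZ_eq_coe hq, WithBot.coe_le_coe] at h; omega

lemma coeffZ_mul {q r : K[X]} {a b : ℤ} (hq : pdegZ q ≤ (a : WithBot ℤ))
    (hr : pdegZ r ≤ (b : WithBot ℤ)) :
    coeffZ (q * r) (a + b) = coeffZ q a * coeffZ r b := by
  by_cases ha : 0 ≤ a
  · by_cases hb : 0 ≤ b
    · have h1 := natDegree_le_of_pdegZ_le ha hq
      have h2 := natDegree_le_of_pdegZ_le hb hr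
      rw [coeffZ, coeffZ, coeffZ, if_pos (by omega), if_pos ha, if_pos hb]
      have h3 : (a + b).toNat = a.toNat + b.toNat := by omega
      rw [h3, Polynomial.coeff_mul_add_eq_of_natDegree_le h1 h2]
    · have hr0 : r = 0 := by
        by_contra h0
        rw [pdegZ_eq_coe h0, WithBot.coe_le_coe] at hr; omega
      simp [hr0, coeffZ]
  · have hq0 : q = 0 := by
      by_contra h0
      rw [pdegZ_eq_coe h0, WithBot.coe_le_coe] at hq; omega
    simp [hq0, coeffZ]

lemma coeffZ_finsum {ι : Type*} (s : Finset ι) (f : ι → K[X]) (e : ℤ) :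
    coeffZ (∑ i ∈ s, f i) e = ∑ i ∈ s, coeffZ (f i) e := by
  unfold coeffZ
  split_ifs with h
  · exact Polynomial.finset_sum_coeff s f e.toNat
  · simp

lemma pdegZ_mono {q r : K[X]} (h : q.degree ≤ r.degree) : pdegZ q ≤ pdegZ r := by
  by_cases hq : q = 0
  · simp [hq, pdegZ_zero]
  · have hr : r ≠ 0 := by
      rintro rfl
      rw [Polynomial.degree_zero, le_bot_iff, Polynomial.degree_eq_bot] at h
      exact hq h
    rw [pdegZ_eq_coe hq, pdegZ_eq_coe hr, WithBot.coe_le_coe]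
    exact_mod_cast Polynomial.natDegree_le_natDegree h

lemma pdegZ_mul_le {q r : K[X]} {a b : ℤ} (hq : pdegZ q ≤ (a : WithBot ℤ))
    (hr : pdegZ r ≤ (b : WithBot ℤ)) :
    pdegZ (q * r) ≤ ((a + b : ℤ) : WithBot ℤ) := by
  by_cases hq0 : q = 0
  · simp [hq0, pdegZ_zero]
  by_cases hr0 : r = 0
  · simp [hr0, pdegZ_zero]
  rw [pdegZ_eq_coe (mul_ne_zero hq0 hr0), WithBot.coe_le_coe,
    Polynomial.natDegree_mul hq0 hr0]
  rw [pdegZ_eq_coe hq0, WithBot.coe_le_coe] at hq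
  rw [pdegZ_eq_coe hr0, WithBot.coe_le_coe] at hr
  push_cast
  omega

lemma pdegZ_add_le {p q : K[X]} {D : WithBot ℤ} (h1 : pdegZ p ≤ D)
    (h2 : pdegZ q ≤ D) : pdegZ (p + q) ≤ D := by
  rcases le_max_iff.mp (Polynomial.degree_add_le p q) with h | h
  · exact le_trans (pdegZ_mono h) h1
  · exact le_trans (pdegZ_mono h) h2

lemma pdegZ_finsum_le {ι : Type*} {s : Finset ι} {f : ι → K[X]} {D : WithBot ℤ}
    (h : ∀ i ∈ s, pdegZ (f i) ≤ D) : pdegZ (∑ i ∈ s, f i) ≤ D := by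
  induction s using Finset.cons_induction with
  | empty => simp [pdegZ_zero]
  | cons a s ha ih =>
    rw [Finset.sum_cons]
    exact pdegZ_add_le (h a (Finset.mem_cons_self a s))
      (ih fun i hi => h i (Finset.mem_cons_of_mem hi))

lemma sdeg_def {n : ℕ} (s : Fin n → ℤ) (p : Fin n → K[X]) :
    sdeg s p = Finset.univ.sup fun j => pdegZ (p j) + (s j : WithBot ℤ) := rfl

lemma sdeg_le_iff {n : ℕ} {s : Fin n → ℤ} {p : Fin n → K[X]} {D : WithBot ℤ} :
    sdeg s p ≤ D ↔ ∀ j, pdegZ (p j) + (s j : WithBot ℤ) ≤ D := by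
  simp [sdeg, Finset.sup_le_iff]

lemma le_sdeg {n : ℕ} (s : Fin n → ℤ) (p : Fin n → K[X]) (j : Fin n) :
    pdegZ (p j) + (s j : WithBot ℤ) ≤ sdeg s p := by
  rw [sdeg_def]
  exact Finset.le_sup (f := fun j => pdegZ (p j) + (s j : WithBot ℤ)) (Finset.mem_univ j)

lemma sdeg_zero_row {n : ℕ} (s : Fin n → ℤ) {p : Fin n → K[X]}
    (hp : ∀ j, p j = 0) : sdeg s p = ⊥ :=
  le_bot_iff.mp (sdeg_le_iff.mpr fun j => by simp [hp j, pdegZ_zero])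

lemma coeffZ_leadMat {m n : ℕ} (P : Matrix (Fin m) (Fin n) K[X]) (s : Fin n → ℤ)
    (t : Fin m → ℤ) (ht : ∀ i, (t i : WithBot ℤ) = sdeg s (P i)) (l : Fin m) (j : Fin n) :
    coeffZ (P l j) (t l - s j) = leadMat s P l j := by
  rw [leadMat, Matrix.of_apply]
  by_cases h : pdegZ (P l j) + (s j : WithBot ℤ) = sdeg s (P l)
  · rw [if_pos h]
    exact coeffZ_of_pdegZ_eq (wb_add_eq.mp (by rw [h, ← ht l]))
  · rw [if_neg h]
    apply coeffZ_eq_zero_of_lt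
    have hle : pdegZ (P l j) + (s j : WithBot ℤ) ≤ (t l : WithBot ℤ) := by
      rw [ht l]; exact le_sdeg s (P l) j
    exact wb_add_lt.mp (lt_of_le_of_ne hle (by rw [ht l]; exact h))

lemma row_mul {k m n : ℕ} (Q : Matrix (Fin k) (Fin m) K[X])
    (P : Matrix (Fin m) (Fin n) K[X]) (i : Fin k) : (Q * P) i = Q i ᵥ* P := by
  funext j
  simp [Matrix.mul_apply, Matrix.vecMul, dotProduct]

lemma vecMul_apply_sum {m n : ℕ} (q : Fin m → K[X]) (P : Matrix (Fin m) (Fin n) K[X])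
    (j : Fin n) : (q ᵥ* P) j = ∑ l, q l * P l j := by
  simp [Matrix.vecMul, dotProduct]

lemma pdp_main {m n : ℕ} (P : Matrix (Fin m) (Fin n) K[X]) (s : Fin n → ℤ) (t : Fin m → ℤ)
    (ht : ∀ i, (t i : WithBot ℤ) = sdeg s (P i)) (q : Fin m → K[X]) (d : ℤ)
    (hq : sdeg t q ≤ (d : WithBot ℤ)) (j : Fin n) :
    pdegZ ((q ᵥ* P) j) ≤ ((d - s j : ℤ) : WithBot ℤ) ∧
      coeffZ ((q ᵥ* P) j) (d - s j) = ∑ l, coeffZ (q l) (d - t l) * leadMat s P l j := by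
  have hql : ∀ l, pdegZ (q l) ≤ ((d - t l : ℤ) : WithBot ℤ) := fun l =>
    wb_add_le.mp ((le_sdeg t q l).trans hq)
  have hPl : ∀ l, pdegZ (P l j) ≤ ((t l - s j : ℤ) : WithBot ℤ) := fun l =>
    wb_add_le.mp ((le_sdeg s (P l) j).trans (le_of_eq (ht l).symm))
  constructor
  · rw [vecMul_apply_sum]
    apply pdegZ_finsum_le
    intro l _
    have h := pdegZ_mul_le (hql l) (hPl l)
    rwa [show (d - t l) + (t l - s j) = d - s j by ring] at h
  · rw [vecMul_apply_sum, coeffZ_finsum]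
    refine Finset.sum_congr rfl fun l _ => ?_
    rw [show d - s j = (d - t l) + (t l - s j) by ring, coeffZ_mul (hql l) (hPl l),
      coeffZ_leadMat P s t ht l j]

lemma reduced_iff_rows_linIndep {m n : ℕ} (s : Fin n → ℤ)
    (P : Matrix (Fin m) (Fin n) K[X]) :
    IsShiftReduced s P ↔ LinearIndependent K (fun i => leadMat s P i) := by
  rw [IsShiftReduced, Matrix.rank_eq_finrank_span_row,
    linearIndependent_iff_card_eq_finrank_span]
  constructor
  · intro h; simp_all [Set.finrank, Matrix.row]; exact h.symm
  · intro h; simp_all [Set.finrank, Matrix.row]; rfl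

end PDPaux

/-- Predictable degree property. -/
theorem stmt0 {K : Type*} [Field K] {m n : ℕ}
    (P : Matrix (Fin m) (Fin n) K[X]) (hP : ∀ i, P i ≠ 0)
    (s : Fin n → ℤ) (t : Fin m → ℤ) (ht : ∀ i, (t i : WithBot ℤ) = sdeg s (P i)) :
    IsShiftReduced s P ↔
      ∀ k : ℕ, 1 ≤ k → ∀ Q : Matrix (Fin k) (Fin m) K[X],
        ∀ i, sdeg s ((Q * P) i) = sdeg t (Q i) := by
  classical
  constructor
  · intro hred k hk Q i
    rw [row_mul]
    by_cases hq0 : Q i = 0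
    · rw [hq0]
      have hz : ((0 : Fin m → K[X]) ᵥ* P) = 0 := by
        funext j; simp [vecMul_apply_sum]
      rw [hz]
      exact (sdeg_zero_row s fun _ => rfl).trans (sdeg_zero_row t fun _ => rfl).symm
    · set q := Q i with hqdef
      obtain ⟨l₀, hl₀⟩ : ∃ l, q l ≠ 0 := by
        by_contra hcon
        push_neg at hcon
        exact hq0 (funext hcon)
      have hne : sdeg t q ≠ ⊥ := by
        intro hb
        have h1 := le_sdeg t q l₀
        rw [hb, le_bot_iff, pdegZ_eq_coe hl₀, ← WithBot.coe_add] at h1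
        exact WithBot.coe_ne_bot h1
      obtain ⟨d, hd⟩ := WithBot.ne_bot_iff_exists.mp hne
      have hdle : sdeg t q ≤ (d : WithBot ℤ) := le_of_eq hd.symm
      obtain ⟨l₁, -, hl₁⟩ := Finset.exists_mem_eq_sup Finset.univ
        ⟨l₀, Finset.mem_univ l₀⟩ (fun l => pdegZ (q l) + (t l : WithBot ℤ))
      rw [← sdeg_def] at hl₁
      have hl₁' : pdegZ (q l₁) = ((d - t l₁ : ℤ) : WithBot ℤ) :=
        wb_add_eq.mp (by rw [← hl₁, ← hd])
      set g : Fin m → K := fun l => coeffZ (q l) (d - t l) with hg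
      have hg1 : g l₁ ≠ 0 := by
        rw [hg]
        simp only
        rw [coeffZ_of_pdegZ_eq hl₁']
        rw [Polynomial.leadingCoeff_ne_zero]
        intro h0
        rw [h0, pdegZ_zero] at hl₁'
        exact WithBot.bot_ne_coe hl₁'
      have hgv : ∃ j, ∑ l, g l * leadMat s P l j ≠ 0 := by
        by_contra hcon
        push_neg at hcon
        have hli := (reduced_iff_rows_linIndep s P).mp hred
        rw [Fintype.linearIndependent_iff] at hli
        refine hg1 (hli g ?_ l₁)
        funext j
        rw [Finset.sum_apply]
        simpa using hcon j
      obtain ⟨j, hj⟩ := hgv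
      rw [← hd]
      apply le_antisymm
      · rw [sdeg_le_iff]
        intro j'
        have h1 := (pdp_main P s t ht q d hdle j').1
        calc pdegZ ((q ᵥ* P) j') + (s j' : WithBot ℤ)
            ≤ ((d - s j' : ℤ) : WithBot ℤ) + (s j' : WithBot ℤ) :=
              add_le_add_left h1 _
          _ = (d : WithBot ℤ) := by rw [← WithBot.coe_add]; norm_num
      · have hc : coeffZ ((q ᵥ* P) j) (d - s j) ≠ 0 := by
          rw [(pdp_main P s t ht q d hdle j).2]
          exact hj
        have h1 := le_pdegZ_of_coeffZ_ne_zero hc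
        calc (d : WithBot ℤ) = ((d - s j : ℤ) : WithBot ℤ) + (s j : WithBot ℤ) := by
              rw [← WithBot.coe_add]; norm_num
          _ ≤ pdegZ ((q ᵥ* P) j) + (s j : WithBot ℤ) := add_le_add_left h1 _
          _ ≤ sdeg s (q ᵥ* P) := le_sdeg s _ j
  · intro h
    rw [reduced_iff_rows_linIndep, Fintype.linearIndependent_iff]
    intro g hgsum
    by_contra hex
    push_neg at hex
    obtain ⟨l₀, hl₀⟩ := hex
    have hgv : ∀ j, ∑ l, g l * leadMat s P l j = 0 := fun j => by
      have h1 := congrFun hgsum j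
      rw [Finset.sum_apply] at h1
      simpa using h1
    set S : Finset (Fin m) := Finset.univ.filter (fun l => g l ≠ 0) with hSdef
    have hS : S.Nonempty := ⟨l₀, by simp [hSdef, hl₀]⟩
    set d := S.sup' hS t with hddef
    have hdl : ∀ l, g l ≠ 0 → t l ≤ d := fun l hl =>
      Finset.le_sup' t (by simp [hSdef, hl])
    set Q : Matrix (Fin 1) (Fin m) K[X] :=
      Matrix.of fun _ l => Polynomial.C (g l) * Polynomial.X ^ (d - t l).toNat with hQ
    have hpq : ∀ l, g l ≠ 0 → pdegZ (Q 0 l) = ((d - t l : ℤ) : WithBot ℤ) := by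
      intro l hl
      have h1 : ((d - t l).toNat : ℤ) = d - t l := Int.toNat_of_nonneg (by
        have := hdl l hl; omega)
      rw [hQ]
      show pdegZ (Polynomial.C (g l) * Polynomial.X ^ (d - t l).toNat) = _
      rw [pdegZ, Polynomial.degree_C_mul_X_pow _ hl, ← h1]
      rfl
    have hpq0 : ∀ l, g l = 0 → Q 0 l = 0 := fun l hl => by
      show Polynomial.C (g l) * Polynomial.X ^ (d - t l).toNat = 0
      simp [hl]
    have hsdegQ : sdeg t (Q 0) = (d : WithBot ℤ) := by
      apply le_antisymm
      · rw [sdeg_le_iff]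
        intro l
        by_cases hl : g l = 0
        · simp [hpq0 l hl, pdegZ_zero]
        · rw [hpq l hl, ← WithBot.coe_add, WithBot.coe_le_coe]
          have := hdl l hl; omega
      · obtain ⟨lm, hlmem, hlm⟩ := Finset.exists_mem_eq_sup' hS t
        have hglm : g lm ≠ 0 := by
          rw [hSdef] at hlmem
          exact (Finset.mem_filter.mp hlmem).2
        calc (d : WithBot ℤ) = pdegZ (Q 0 lm) + (t lm : WithBot ℤ) := by
              rw [hpq lm hglm, ← WithBot.coe_add, WithBot.coe_inj]; omega
          _ ≤ sdeg t (Q 0) := le_sdeg t (Q 0) lm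
    have heq := h 1 le_rfl Q 0
    rw [row_mul, hsdegQ] at heq
    have hsle : sdeg t (Q 0) ≤ (d : WithBot ℤ) := le_of_eq hsdegQ
    have hcoef : ∀ j, coeffZ ((Q 0 ᵥ* P) j) (d - s j) = 0 := by
      intro j
      rw [(pdp_main P s t ht (Q 0) d hsle j).2]
      have hco : ∀ l, coeffZ (Q 0 l) (d - t l) = g l := by
        intro l
        by_cases hl : g l = 0
        · simp [hpq0 l hl, coeffZ, hl]
        · rw [coeffZ_of_pdegZ_eq (hpq l hl)]
          show (Polynomial.C (g l) * Polynomial.X ^ (d - t l).toNat).leadingCoeff = g l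
          exact Polynomial.leadingCoeff_C_mul_X_pow (g l) _
      simp_rw [hco]
      exact hgv j
    have huniv : (Finset.univ : Finset (Fin n)).Nonempty := by
      by_contra hemp
      rw [Finset.not_nonempty_iff_eq_empty] at hemp
      rw [sdeg_def, hemp, Finset.sup_empty] at heq
      exact WithBot.bot_ne_coe heq
    obtain ⟨j, -, hj⟩ := Finset.exists_mem_eq_sup Finset.univ huniv
      (fun j => pdegZ ((Q 0 ᵥ* P) j) + (s j : WithBot ℤ))
    rw [← sdeg_def, heq] at hj
    have hdeg : pdegZ ((Q 0 ᵥ* P) j) = ((d - s j : ℤ) : WithBot ℤ) :=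
      wb_add_eq.mp hj.symm
    have hne0 : (Q 0 ᵥ* P) j ≠ 0 := fun h0 => by
      rw [h0, pdegZ_zero] at hdeg
      exact WithBot.bot_ne_coe hdeg
    exact (Polynomial.leadingCoeff_ne_zero.mpr hne0)
      ((coeffZ_of_pdegZ_eq hdeg).symm.trans (hcoef j))

end
end

section
/- Let K be a field, let P ∈ K[x]^{m×n} have no zero row, let s ∈ ℤ^n, let t = rdeg_s(P), and let (π_i, δ_i)_{1≤i≤m} be the s-pivot profile of P. Assume P is in s-weak Popov form. Then for every Q ∈ K[x]^{k×m} with no zero row, if (j_i, d_i)_{1≤i≤k} is the t-pivot profile of Q, the s-pivot profile of Q·P is (π_{j_i}, δ_{j_i} + d_i)_{1≤i≤k}. -/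
open Polynomial Matrix

noncomputable section

variable {K : Type*} [Field K]

section AuxPP

lemma pdegZ_eq_bot {p : K[X]} : pdegZ p = ⊥ ↔ p = 0 := by
  simp [pdegZ, WithBot.map_eq_bot_iff, Polynomial.degree_eq_bot]

lemma pdegZ_mul (p q : K[X]) : pdegZ (p * q) = pdegZ p + pdegZ q := by
  unfold pdegZ
  rw [Polynomial.degree_mul]
  exact WithBot.map_add (Nat.castRingHom ℤ).toAddMonoidHom p.degree q.degree

lemma pdegZ_le_iff {p q : K[X]} : pdegZ p ≤ pdegZ q ↔ p.degree ≤ q.degree :=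
  WithBot.map_le_iff _ (fun {_ _} => Nat.cast_le)

lemma pdegZ_lt_iff {p q : K[X]} : pdegZ p < pdegZ q ↔ p.degree < q.degree :=
  lt_iff_lt_of_le_iff_le (pdegZ_le_iff (p := q) (q := p))

lemma degree_sum_eq_of_dominant {ι : Type*} [Fintype ι] [DecidableEq ι] (f : ι → K[X]) (l₀ : ι)
    (h0 : f l₀ ≠ 0) (h : ∀ l, l ≠ l₀ → (f l).degree < (f l₀).degree) :
    (∑ l, f l).degree = (f l₀).degree := by
  rw [← Finset.sum_erase_add _ _ (Finset.mem_univ l₀)]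
  rw [Polynomial.degree_add_eq_right_of_degree_lt]
  refine lt_of_le_of_lt (Polynomial.degree_sum_le _ _) ?_
  rw [Finset.sup_lt_iff (by rw [bot_lt_iff_ne_bot, ne_eq, Polynomial.degree_eq_bot]; exact h0)]
  intro l hl
  exact h l (Finset.ne_of_mem_erase hl)

lemma pdegZ_sum_le_exists {ι : Type*} [Fintype ι] [Nonempty ι] (f : ι → K[X]) :
    ∃ l, pdegZ (∑ x, f x) ≤ pdegZ (f l) := by
  obtain ⟨l, -, hl⟩ := Finset.exists_mem_eq_sup Finset.univ Finset.univ_nonempty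
    (fun l => (f l).degree)
  exact ⟨l, pdegZ_le_iff.2 (le_trans (Polynomial.degree_sum_le _ _) (le_of_eq hl))⟩

end AuxPP

/-- Predictable pivot property. -/
theorem stmt3 {K : Type*} [Field K] {m n k : ℕ}
    (P : Matrix (Fin m) (Fin n) K[X]) (hP : ∀ i, P i ≠ 0)
    (s : Fin n → ℤ) (t : Fin m → ℤ) (ht : ∀ i, (t i : WithBot ℤ) = sdeg s (P i))
    (π : Fin m → Fin n) (hπ : ∀ i, IsPivotIndex s (P i) (π i)) (hmono : StrictMono π)
    (δ : Fin m → ℕ) (hδ : ∀ i, δ i = (P i (π i)).natDegree)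
    (Q : Matrix (Fin k) (Fin m) K[X]) (hQ : ∀ i, Q i ≠ 0)
    (j : Fin k → Fin m) (hj : ∀ i, IsPivotIndex t (Q i) (j i))
    (d : Fin k → ℕ) (hd : ∀ i, d i = (Q i (j i)).natDegree) :
    ∀ i : Fin k, (Q * P) i ≠ 0 ∧ IsPivotIndex s ((Q * P) i) (π (j i)) ∧
      ((Q * P) i (π (j i))).natDegree = δ (j i) + d i := by
  intro i
  -- basic notations
  have hQjP : ∀ l, Q i l ≠ 0 → True := fun _ _ => trivial
  haveI : Nonempty (Fin m) := by
    rcases Nat.eq_zero_or_pos m with h | h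
    · exfalso
      apply hQ i
      funext l
      exact absurd l.2 (by omega)
    · exact ⟨⟨0, h⟩⟩
  obtain ⟨hjeq, hjlt⟩ := hj i
  set jj := j i with hjj
  set c₀ := π jj with hc₀
  set D : WithBot ℤ := sdeg t (Q i) with hD
  -- D is not ⊥
  have hDbot : D ≠ ⊥ := by
    obtain ⟨l, hl⟩ : ∃ l, Q i l ≠ 0 := by
      by_contra hcon
      push_neg at hcon
      exact hQ i (funext fun l => hcon l)
    intro hbot
    have h1 : pdegZ (Q i l) + (t l : WithBot ℤ) ≤ D := by
      rw [hD]; unfold sdeg; exact Finset.le_sup (f := fun l => pdegZ (Q i l) + (t l : WithBot ℤ)) (Finset.mem_univ l)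
    rw [hbot, le_bot_iff, WithBot.add_eq_bot] at h1
    rcases h1 with h1 | h1
    · exact hl (pdegZ_eq_bot.1 h1)
    · exact WithBot.coe_ne_bot h1
  -- the pivot entry of Q is nonzero
  have hQjj : Q i jj ≠ 0 := by
    intro hcon
    apply hDbot
    rw [← hjeq, hcon]
    simp [pdegZ]
  -- pivot entries of P are nonzero
  have hPpiv : ∀ l, P l (π l) ≠ 0 := by
    intro l hcon
    have h1 := (hπ l).1
    rw [hcon, ← ht l] at h1
    simp only [pdegZ, Polynomial.degree_zero, WithBot.map_bot, WithBot.bot_add] at h1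
    exact WithBot.coe_ne_bot h1.symm
  -- basic bounds
  have hPle : ∀ l c, pdegZ (P l c) + (s c : WithBot ℤ) ≤ (t l : WithBot ℤ) := by
    intro l c
    rw [ht l]
    unfold sdeg; exact Finset.le_sup (f := fun c => pdegZ (P l c) + (s c : WithBot ℤ)) (Finset.mem_univ c)
  have hPlt : ∀ l c, π l < c → pdegZ (P l c) + (s c : WithBot ℤ) < (t l : WithBot ℤ) := by
    intro l c hlt
    refine lt_of_le_of_ne (hPle l c) ?_
    rw [ht l]
    exact (hπ l).2 c hlt
  have hterm_le : ∀ l c,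
      pdegZ (Q i l * P l c) + (s c : WithBot ℤ) ≤ pdegZ (Q i l) + (t l : WithBot ℤ) := by
    intro l c
    rw [pdegZ_mul, add_assoc]
    exact add_le_add_right (hPle l c) _
  have hl_le : ∀ l, pdegZ (Q i l) + (t l : WithBot ℤ) ≤ D := by
    intro l; rw [hD]; unfold sdeg; exact Finset.le_sup (f := fun l => pdegZ (Q i l) + (t l : WithBot ℤ)) (Finset.mem_univ l)
  have hlt_of_gt : ∀ l, jj < l → pdegZ (Q i l) + (t l : WithBot ℤ) < D :=
    fun l hlt => lt_of_le_of_ne (hl_le l) (hjlt l hlt)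
  -- the key strict bound
  have hkey : ∀ (c : Fin n) (l : Fin m), π l < c ∨ jj < l →
      pdegZ (Q i l * P l c) + (s c : WithBot ℤ) < D := by
    intro c l hcase
    rcases hcase with h | h
    · by_cases hq : Q i l = 0
      · rw [hq, zero_mul]
        simp only [pdegZ, Polynomial.degree_zero, WithBot.map_bot, WithBot.bot_add]
        exact hDbot.bot_lt
      · have h2 : pdegZ (Q i l * P l c) + (s c : WithBot ℤ)
            = pdegZ (Q i l) + (pdegZ (P l c) + (s c : WithBot ℤ)) := by
          rw [pdegZ_mul, add_assoc]
        rw [h2]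
        calc pdegZ (Q i l) + (pdegZ (P l c) + (s c : WithBot ℤ))
            < pdegZ (Q i l) + (t l : WithBot ℤ) :=
              WithBot.add_lt_add_left (fun hb => hq (pdegZ_eq_bot.1 hb)) (hPlt l c h)
          _ ≤ D := hl_le l
    · exact lt_of_le_of_lt (hterm_le l c) (hlt_of_gt l h)
  -- the main term has degree exactly D - s c₀
  have hmain : pdegZ (Q i jj * P jj c₀) + (s c₀ : WithBot ℤ) = D := by
    rw [pdegZ_mul, add_assoc]
    have h1 : pdegZ (P jj c₀) + (s c₀ : WithBot ℤ) = (t jj : WithBot ℤ) := by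
      rw [ht jj]; exact (hπ jj).1
    rw [h1, ← hjeq]
  have hmainne : Q i jj * P jj c₀ ≠ 0 := mul_ne_zero hQjj (hPpiv jj)
  -- degree of the pivot entry of Q*P
  have hentry : ((Q * P) i c₀).degree = (Q i jj * P jj c₀).degree := by
    rw [Matrix.mul_apply]
    refine degree_sum_eq_of_dominant (fun l => Q i l * P l c₀) jj hmainne ?_
    intro l hl
    rw [← pdegZ_lt_iff]
    have hcase : π l < c₀ ∨ jj < l := by
      rcases lt_or_gt_of_ne hl with h | h
      · exact Or.inl (hmono h)
      · exact Or.inr h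
    have h1 := hkey c₀ l hcase
    rw [← hmain] at h1
    exact lt_of_add_lt_add_right h1
  have hentrypd : pdegZ ((Q * P) i c₀) = pdegZ (Q i jj * P jj c₀) := by
    unfold pdegZ
    rw [hentry]
  have hentryne : (Q * P) i c₀ ≠ 0 := by
    intro hcon
    apply hmainne
    rw [← Polynomial.degree_eq_bot, ← hentry, hcon, Polynomial.degree_zero]
  -- every shifted column degree of the row is ≤ D
  have hcol_le : ∀ c, pdegZ ((Q * P) i c) + (s c : WithBot ℤ) ≤ D := by
    intro c
    rw [Matrix.mul_apply]
    obtain ⟨l, hl⟩ := pdegZ_sum_le_exists (fun l => Q i l * P l c)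
    calc pdegZ (∑ x, Q i x * P x c) + (s c : WithBot ℤ)
        ≤ pdegZ (Q i l * P l c) + (s c : WithBot ℤ) := add_le_add_left hl _
      _ ≤ pdegZ (Q i l) + (t l : WithBot ℤ) := hterm_le l c
      _ ≤ D := hl_le l
  have hsdeg : sdeg s ((Q * P) i) = D := by
    unfold sdeg
    refine le_antisymm (Finset.sup_le fun c _ => hcol_le c) ?_
    rw [← hmain, ← hentrypd]
    exact Finset.le_sup (f := fun c => pdegZ ((Q * P) i c) + (s c : WithBot ℤ)) (Finset.mem_univ c₀)
  refine ⟨?_, ⟨?_, ?_⟩, ?_⟩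
  · intro hcon
    exact hentryne (congrFun hcon c₀)
  · rw [hsdeg, hentrypd, hmain]
  · intro c hc hcon
    rw [hsdeg] at hcon
    have hlt : pdegZ ((Q * P) i c) + (s c : WithBot ℤ) < D := by
      rw [Matrix.mul_apply]
      obtain ⟨l, hl⟩ := pdegZ_sum_le_exists (fun l => Q i l * P l c)
      have hcase : π l < c ∨ jj < l := by
        rcases le_or_gt l jj with h | h
        · exact Or.inl (lt_of_le_of_lt (hmono.monotone h) hc)
        · exact Or.inr h
      calc pdegZ (∑ x, Q i x * P x c) + (s c : WithBot ℤ)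
          ≤ pdegZ (Q i l * P l c) + (s c : WithBot ℤ) := add_le_add_left hl _
        _ < D := hkey c l hcase
    exact absurd hcon (ne_of_lt hlt)
  · have h1 : ((Q * P) i c₀).natDegree = (Q i jj * P jj c₀).natDegree :=
      Polynomial.natDegree_eq_natDegree hentry
    rw [h1, Polynomial.natDegree_mul hQjj (hPpiv jj), hd i, hδ jj, ← hjj, ← hc₀]
    omega


end
end

section
/- Let K be a field and let F ∈ K[x]^{m×n} be partitioned columnwise as F = [F₁ | F₂] with F₁ ∈ K[x]^{m×n₁} and F₂ ∈ K[x]^{m×n₂}. Let K₁ ∈ K[x]^{ℓ₁×m} be a basis of Ker(F₁) and let K₂ ∈ K[x]^{ℓ₂×ℓ₁} be a basis of Ker(K₁·F₂). Then the product K₂·K₁ is a basis of Ker(F). -/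
open Polynomial Matrix

noncomputable section

variable {K : Type*} [Field K]

/-- Composition of kernel bases along a column partition. -/
theorem stmt14 {K : Type*} [Field K] {m n₁ n₂ ℓ₁ ℓ₂ : ℕ}
    (F₁ : Matrix (Fin m) (Fin n₁) K[X]) (F₂ : Matrix (Fin m) (Fin n₂) K[X])
    (K₁ : Matrix (Fin ℓ₁) (Fin m) K[X]) (hK₁ : IsKernelBasis K₁ F₁)
    (K₂ : Matrix (Fin ℓ₂) (Fin ℓ₁) K[X]) (hK₂ : IsKernelBasis K₂ (K₁ * F₂)) :
    IsKernelBasis (K₂ * K₁) (Matrix.fromCols F₁ F₂) := by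
  obtain ⟨h1a, h1b, h1c⟩ := hK₁
  obtain ⟨h2a, h2b, h2c⟩ := hK₂
  have hrow : ∀ i, (K₂ * K₁) i = K₂ i ᵥ* K₁ := fun i => Matrix.mul_apply_eq_vecMul K₂ K₁ i
  refine ⟨?_, ?_, ?_⟩
  · intro i
    rw [hrow, Matrix.vecMul_fromCols]
    have hA : (K₂ i ᵥ* K₁) ᵥ* F₁ = 0 := by
      rw [Matrix.vecMul_vecMul]
      have : K₁ * F₁ = 0 := by
        refine Matrix.ext fun a b => ?_
        have := congrFun (h1a a) b
        simpa [Matrix.mul_apply_eq_vecMul] using this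
      simp [this]
    have hB : (K₂ i ᵥ* K₁) ᵥ* F₂ = 0 := by
      rw [Matrix.vecMul_vecMul]
      exact h2a i
    rw [hA, hB]
    ext (_ | _) <;> rfl
  · rw [Fintype.linearIndependent_iff] at h1b h2b ⊢
    intro g hg
    have hg' : (g ᵥ* K₂) ᵥ* K₁ = 0 := by
      rw [Matrix.vecMul_vecMul, ← hg]
      funext j
      simp [Matrix.vecMul, dotProduct, Finset.sum_apply, smul_eq_mul, Pi.smul_apply]
    have h0 : g ᵥ* K₂ = 0 := by
      have := h1b (g ᵥ* K₂) ?_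
      · funext j; exact this j
      · rw [← hg']
        funext j
        simp [Matrix.vecMul, dotProduct, Finset.sum_apply, smul_eq_mul, Pi.smul_apply]
    intro i
    refine h2b g ?_ i
    rw [← h0]
    funext j
    simp [Matrix.vecMul, dotProduct, Finset.sum_apply, smul_eq_mul, Pi.smul_apply]
  · intro p hp
    have hp1 : p ᵥ* F₁ = 0 := by
      funext j
      simpa using congrFun hp (Sum.inl j)
    have hp2 : p ᵥ* F₂ = 0 := by
      funext j
      simpa using congrFun hp (Sum.inr j)
    obtain ⟨u, hu⟩ := h1c p hp1
    have hu2 : u ᵥ* (K₁ * F₂) = 0 := by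
      rw [← Matrix.vecMul_vecMul, ← hu, hp2]
    obtain ⟨v, hv⟩ := h2c u hu2
    exact ⟨v, by rw [hu, hv, Matrix.vecMul_vecMul]⟩

end
end
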